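/- Assume |{i : u_i ≥ 0}| ≥ κ, κ ≥ 2, and 0 < G^S ≤ ΔU_{ĸ̂} where G^S = −∑_{i=1}^{ĸ̂} u_i and ΔU_{ĸ̂} = ∑_{j>ĸ̂}(u_j − u_{ĸ̂}). Then r ∈ E if and only if: (1) −u_j ≤ r_j ≤ 0 ≤ r_i for all i ≤ ĸ̂ < j; (2) u_i + r_i ≤ u_j + r_j for all i ≤ ĸ̂ < j; (3) ∑_{i≤ĸ̂} r_i = G^S = −∑_{j>ĸ̂} r_j. Moreover every equilibrium has T(r) = G^S. -/

import Mathlib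

open Finset

/-- `r ∈ S₀`: `r` is zero-sum and `∑_{i∈C}(u_i + r_i) ≥ 0` for every coalition `C`
with `|C| ≥ ĸ̂ = I - κ + 1` (characterization of stable promises contingent on the reform). -/
def inS0 {I : ℕ} (κ : ℕ) (u r : Fin I → ℝ) : Prop :=
  (∑ i, r i = 0) ∧
  ∀ C : Finset (Fin I), I - κ + 1 ≤ C.card → 0 ≤ ∑ i ∈ C, (u i + r i)

/-- Total promises transfer `T(r) = (1/2) ∑_i |r_i|`. -/
noncomputable def totT {I : ℕ} (r : Fin I → ℝ) : ℝ := (∑ i, |r i|) / 2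

/-- `r ∈ E`: `r` is stable and minimizes the total transfer over `S₀`. -/
def inE {I : ℕ} (κ : ℕ) (u r : Fin I → ℝ) : Prop :=
  inS0 κ u r ∧ ∀ r' : Fin I → ℝ, inS0 κ u r' → totT r ≤ totT r'

lemma card_filter_fin_lt {I k : ℕ} (hk : k ≤ I) :
    (univ.filter (fun i : Fin I => (i : ℕ) < k)).card = k := by
  have himg : (univ.filter (fun i : Fin I => (i : ℕ) < k)).image Fin.val = Finset.range k := by
    ext n
    simp only [mem_image, mem_filter, mem_univ, true_and, mem_range]
    constructor
    · rintro ⟨i, hi, rfl⟩; exact hi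
    · intro hn; exact ⟨⟨n, by omega⟩, hn, rfl⟩
  have h2 := Finset.card_image_of_injective
    (univ.filter (fun i : Fin I => (i : ℕ) < k)) (Fin.val_injective)
  rw [himg, Finset.card_range] at h2
  omega

lemma sum_split_fin {I k : ℕ} (f : Fin I → ℝ) :
    ∑ i, f i = (∑ i ∈ univ.filter (fun i : Fin I => (i : ℕ) < k), f i)
      + ∑ i ∈ univ.filter (fun i : Fin I => k ≤ (i : ℕ)), f i := by
  rw [← Finset.sum_filter_add_sum_filter_not univ (fun i : Fin I => (i : ℕ) < k) f]
  congr 2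
  ext i
  simp [not_lt]

set_option maxHeartbeats 1000000 in
theorem equilibrium_first_order_preemption {I : ℕ} (κ : ℕ) (hκ : 2 ≤ κ) (hκI : κ ≤ I)
    (u : Fin I → ℝ) (hmono : Monotone u) (hu : 0 < ∑ i, u i)
    (hsupp : κ ≤ (univ.filter (fun i : Fin I => 0 ≤ u i)).card)
    (GS : ℝ) (hGS : GS = -∑ i ∈ univ.filter (fun i : Fin I => (i : ℕ) < I - κ + 1), u i)
    (hGSpos : 0 < GS)
    (hGSle : GS ≤ ∑ j ∈ univ.filter (fun j : Fin I => I - κ + 1 ≤ (j : ℕ)),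
        (u j - u ⟨I - κ, by omega⟩)) :
    ∀ r : Fin I → ℝ,
      (inE κ u r ↔
        ((∀ i : Fin I, (i : ℕ) < I - κ + 1 → 0 ≤ r i) ∧
         (∀ j : Fin I, I - κ + 1 ≤ (j : ℕ) → -u j ≤ r j ∧ r j ≤ 0) ∧
         (∀ i j : Fin I, (i : ℕ) < I - κ + 1 → I - κ + 1 ≤ (j : ℕ) →
            u i + r i ≤ u j + r j) ∧
         (∑ i ∈ univ.filter (fun i : Fin I => (i : ℕ) < I - κ + 1), r i = GS) ∧
         (∑ j ∈ univ.filter (fun j : Fin I => I - κ + 1 ≤ (j : ℕ)), r j = -GS))) ∧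
      (inE κ u r → totT r = GS) := by
  set k : ℕ := I - κ + 1 with hk
  set L : Finset (Fin I) := univ.filter (fun i : Fin I => (i : ℕ) < k) with hL
  set H : Finset (Fin I) := univ.filter (fun i : Fin I => k ≤ (i : ℕ)) with hH
  have hkI : k ≤ I := by omega
  have hcardL : L.card = k := card_filter_fin_lt hkI
  have hcardLH : L.card + H.card = I := by
    have := Finset.card_filter_add_card_filter_not
      (s := (univ : Finset (Fin I))) (p := fun i : Fin I => (i : ℕ) < k)
    rw [Finset.card_univ, Fintype.card_fin] at this
    have hfe : univ.filter (fun i : Fin I => ¬ (i : ℕ) < k) = H := by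
      ext i; simp [hH, not_lt]
    rw [hL, ← hfe]
    exact this
  have hcardH : H.card = κ - 1 := by omega
  have hsumLu : ∑ i ∈ L, u i = -GS := by rw [hGS]; ring
  have hsplit : ∀ f : Fin I → ℝ, ∑ i, f i = (∑ i ∈ L, f i) + ∑ i ∈ H, f i :=
    fun f => sum_split_fin f
  set mI : Fin I := ⟨I - κ, by omega⟩ with hmI
  set m : ℝ := u mI with hm
  have hLu : ∀ i : Fin I, (i : ℕ) < k → u i ≤ m := by
    intro i hi
    exact hmono (show i ≤ mI from Fin.le_def.2 (show (i : ℕ) ≤ I - κ by omega))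
  have hHu : ∀ j : Fin I, k ≤ (j : ℕ) → m ≤ u j := by
    intro j hj
    exact hmono (show mI ≤ j from Fin.le_def.2 (show I - κ ≤ (j : ℕ) by omega))
  -- membership facts
  have hmemL : ∀ i : Fin I, i ∈ L ↔ (i : ℕ) < k := by
    intro i; simp [hL]
  have hmemH : ∀ j : Fin I, j ∈ H ↔ k ≤ (j : ℕ) := by
    intro j; simp [hH]
  have hm0 : 0 ≤ m := by
    by_contra hneg
    push_neg at hneg
    have hsub : (univ.filter (fun i : Fin I => 0 ≤ u i)) ⊆ H := by
      intro i hi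
      simp only [mem_filter, mem_univ, true_and] at hi
      rw [hmemH]
      by_contra hik
      push_neg at hik
      exact absurd hi (by linarith [hLu i hik])
    have := Finset.card_le_card hsub
    omega
  -- lower bound for any member of S₀
  have lower : ∀ r' : Fin I → ℝ, inS0 κ u r' →
      GS ≤ ∑ i ∈ L, r' i ∧ GS ≤ totT r' := by
    intro r' ⟨hz, hc⟩
    have hA : GS ≤ ∑ i ∈ L, r' i := by
      have h0 := hc L (by rw [hcardL])
      rw [Finset.sum_add_distrib, hsumLu] at h0
      linarith
    refine ⟨hA, ?_⟩
    have hB : ∑ i ∈ H, r' i = -∑ i ∈ L, r' i := by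
      have := hsplit r'
      rw [hz] at this; linarith
    have h1 : ∑ i ∈ L, r' i ≤ ∑ i ∈ L, |r' i| :=
      Finset.sum_le_sum (fun i _ => le_abs_self _)
    have h2 : -∑ i ∈ H, r' i ≤ ∑ i ∈ H, |r' i| := by
      rw [← Finset.sum_neg_distrib]
      exact Finset.sum_le_sum (fun i _ => neg_le_abs _)
    have : (∑ i, |r' i|) = (∑ i ∈ L, |r' i|) + ∑ i ∈ H, |r' i| := hsplit _
    rw [totT, this]
    rw [hB] at h2
    linarith
  -- sufficiency: the conditions imply membership in S₀ with totT = GS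
  have suffic : ∀ r : Fin I → ℝ,
      (∀ i : Fin I, (i : ℕ) < k → 0 ≤ r i) →
      (∀ j : Fin I, k ≤ (j : ℕ) → -u j ≤ r j ∧ r j ≤ 0) →
      (∀ i j : Fin I, (i : ℕ) < k → k ≤ (j : ℕ) → u i + r i ≤ u j + r j) →
      (∑ i ∈ L, r i = GS) → (∑ j ∈ H, r j = -GS) →
      inS0 κ u r ∧ totT r = GS := by
    intro r h1 h2 h3 h4 h5
    set v : Fin I → ℝ := fun i => u i + r i with hv
    have hvLsum : ∑ i ∈ L, v i = 0 := by
      rw [hv]; rw [Finset.sum_add_distrib, hsumLu, h4]; ring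
    have hvH : ∀ j ∈ H, 0 ≤ v j := by
      intro j hj
      have := (h2 j ((hmemH j).1 hj)).1
      simp only [hv]; linarith
    have hvLH : ∀ i ∈ L, ∀ j ∈ H, v i ≤ v j := by
      intro i hi j hj
      exact h3 i j ((hmemL i).1 hi) ((hmemH j).1 hj)
    constructor
    · constructor
      · rw [hsplit r, h4, h5]; ring
      · intro C hC
        -- split C into C∩L and C∩H
        have hCsplit : ∑ i ∈ C, v i = (∑ i ∈ C.filter (fun i : Fin I => (i : ℕ) < k), v i)
            + ∑ i ∈ C.filter (fun i : Fin I => k ≤ (i : ℕ)), v i := by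
          rw [← Finset.sum_filter_add_sum_filter_not C (fun i : Fin I => (i : ℕ) < k) v]
          congr 2
          exact Finset.filter_congr (fun i _ => by simp [not_lt])
        have hCL : C.filter (fun i : Fin I => (i : ℕ) < k) = L ∩ C := by
          ext i
          simp only [mem_filter, mem_inter, hL, mem_univ, true_and]
          exact and_comm
        have hCHsub : C.filter (fun i : Fin I => k ≤ (i : ℕ)) ⊆ H := by
          intro i hi
          simp only [mem_filter] at hi
          exact (hmemH i).2 hi.2
        set A' : Finset (Fin I) := L \ C with hA'
        have hLdecomp : (∑ i ∈ L ∩ C, v i) + ∑ i ∈ A', v i = ∑ i ∈ L, v i :=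
          Finset.sum_inter_add_sum_sdiff L C v
        have hcards : A'.card ≤ (C.filter (fun i : Fin I => k ≤ (i : ℕ))).card := by
          have hc1 : (L ∩ C).card + A'.card = L.card := Finset.card_inter_add_card_sdiff L C
          have hc2 : (C.filter (fun i : Fin I => (i : ℕ) < k)).card
              + (C.filter (fun i : Fin I => ¬ (i : ℕ) < k)).card = C.card :=
            Finset.card_filter_add_card_filter_not _
          have hc3 : C.filter (fun i : Fin I => ¬ (i : ℕ) < k) = C.filter (fun i : Fin I => k ≤ (i : ℕ)) :=
            Finset.filter_congr (fun i _ => by simp [not_lt])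
          rw [hCL] at hc2
          rw [hc3] at hc2
          omega
        have key : ∑ i ∈ A', v i ≤ ∑ i ∈ C.filter (fun i : Fin I => k ≤ (i : ℕ)), v i := by
          rcases Finset.eq_empty_or_nonempty A' with he | hne
          · rw [he, Finset.sum_empty]
            exact Finset.sum_nonneg (fun j hj => hvH j (hCHsub hj))
          · obtain ⟨i₀, hi₀, hmax⟩ := Finset.exists_max_image A' v hne
            have hi₀L : i₀ ∈ L := (Finset.mem_sdiff.1 hi₀).1
            by_cases hvi : v i₀ ≤ 0
            · have : ∑ i ∈ A', v i ≤ 0 :=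
                Finset.sum_nonpos (fun i hi => le_trans (hmax i hi) hvi)
              exact le_trans this (Finset.sum_nonneg (fun j hj => hvH j (hCHsub hj)))
            · push_neg at hvi
              have hub : ∑ i ∈ A', v i ≤ A'.card • v i₀ :=
                Finset.sum_le_card_nsmul A' v (v i₀) (fun i hi => hmax i hi)
              have hlb : (C.filter (fun i : Fin I => k ≤ (i : ℕ))).card • v i₀
                  ≤ ∑ i ∈ C.filter (fun i : Fin I => k ≤ (i : ℕ)), v i :=
                Finset.card_nsmul_le_sum _ v (v i₀)
                  (fun j hj => hvLH i₀ hi₀L j (hCHsub hj))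
              have hmid : (A'.card : ℝ) * v i₀
                  ≤ ((C.filter (fun i : Fin I => k ≤ (i : ℕ))).card : ℝ) * v i₀ :=
                mul_le_mul_of_nonneg_right (by exact_mod_cast hcards) hvi.le
              rw [nsmul_eq_mul] at hub hlb
              linarith
        calc (0 : ℝ) = ∑ i ∈ L, v i := hvLsum.symm
          _ ≤ ∑ i ∈ C, v i := by rw [hCsplit, hCL]; linarith
    · have habsL : ∑ i ∈ L, |r i| = ∑ i ∈ L, r i :=
        Finset.sum_congr rfl (fun i hi => abs_of_nonneg (h1 i ((hmemL i).1 hi)))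
      have habsH : ∑ j ∈ H, |r j| = -∑ j ∈ H, r j := by
        rw [← Finset.sum_neg_distrib]
        exact Finset.sum_congr rfl (fun j hj => abs_of_nonpos (h2 j ((hmemH j).1 hj)).2)
      rw [totT, hsplit (fun i => |r i|), habsL, habsH, h4, h5]
      ring
  -- explicit equilibrium r₀
  set Δ : ℝ := ∑ j ∈ H, (u j - m) with hΔ
  have hΔge : GS ≤ Δ := hGSle
  have hΔpos : 0 < Δ := lt_of_lt_of_le hGSpos hΔge
  set D : ℝ := ∑ i ∈ L, (m - u i) with hD
  have hDval : D = k * m + GS := by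
    rw [hD, Finset.sum_sub_distrib, hsumLu, Finset.sum_const, hcardL, nsmul_eq_mul]
    ring
  have hDge : GS ≤ D := by
    have : (0 : ℝ) ≤ (k : ℝ) * m := mul_nonneg (by positivity) hm0
    linarith [hDval]
  have hDpos : 0 < D := lt_of_lt_of_le hGSpos hDge
  set r₀ : Fin I → ℝ := fun i =>
    if (i : ℕ) < k then GS * (m - u i) / D else -(GS / Δ) * (u i - m) with hr₀
  have hr₀L : ∀ i : Fin I, (i : ℕ) < k → r₀ i = GS * (m - u i) / D := by
    intro i hi; simp [hr₀, hi]
  have hr₀H : ∀ j : Fin I, k ≤ (j : ℕ) → r₀ j = -(GS / Δ) * (u j - m) := by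
    intro j hj; simp [hr₀, Nat.not_lt.2 hj]
  have hc1 : ∀ i : Fin I, (i : ℕ) < k → 0 ≤ r₀ i := by
    intro i hi
    rw [hr₀L i hi]
    have h := hLu i hi
    apply div_nonneg _ hDpos.le
    exact mul_nonneg hGSpos.le (by linarith)
  have hrat : ∀ j : Fin I, k ≤ (j : ℕ) → (GS / Δ) * (u j - m) ≤ u j - m := by
    intro j hj
    have h := hHu j hj
    have h1 : GS / Δ ≤ 1 := (div_le_one hΔpos).2 hΔge
    calc (GS / Δ) * (u j - m) ≤ 1 * (u j - m) :=
          mul_le_mul_of_nonneg_right h1 (by linarith)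
      _ = u j - m := one_mul _
  have hc2 : ∀ j : Fin I, k ≤ (j : ℕ) → -u j ≤ r₀ j ∧ r₀ j ≤ 0 := by
    intro j hj
    rw [hr₀H j hj]
    have h := hHu j hj
    have h2 := hrat j hj
    constructor
    · nlinarith
    · have : 0 ≤ (GS / Δ) * (u j - m) :=
        mul_nonneg (div_nonneg hGSpos.le hΔpos.le) (by linarith)
      linarith
  have hc3 : ∀ i j : Fin I, (i : ℕ) < k → k ≤ (j : ℕ) → u i + r₀ i ≤ u j + r₀ j := by
    intro i j hi hj
    rw [hr₀L i hi, hr₀H j hj]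
    have hui := hLu i hi
    have huj := hHu j hj
    have h2 := hrat j hj
    have hleft : GS * (m - u i) / D ≤ m - u i := by
      rw [div_le_iff₀ hDpos]
      nlinarith
    nlinarith
  have hc4 : ∑ i ∈ L, r₀ i = GS := by
    have : ∑ i ∈ L, r₀ i = ∑ i ∈ L, GS * (m - u i) / D :=
      Finset.sum_congr rfl (fun i hi => hr₀L i ((hmemL i).1 hi))
    rw [this, ← Finset.sum_div, ← Finset.mul_sum, ← hD, mul_div_assoc,
      div_self hDpos.ne', mul_one]
  have hc5 : ∑ j ∈ H, r₀ j = -GS := by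
    have : ∑ j ∈ H, r₀ j = ∑ j ∈ H, -(GS / Δ) * (u j - m) :=
      Finset.sum_congr rfl (fun j hj => hr₀H j ((hmemH j).1 hj))
    rw [this, ← Finset.mul_sum, ← hΔ]
    field_simp
  obtain ⟨hr₀S, hr₀T⟩ := suffic r₀ hc1 hc2 hc3 hc4 hc5
  -- main statement
  intro r
  have hiff : inE κ u r ↔
      ((∀ i : Fin I, (i : ℕ) < k → 0 ≤ r i) ∧
       (∀ j : Fin I, k ≤ (j : ℕ) → -u j ≤ r j ∧ r j ≤ 0) ∧
       (∀ i j : Fin I, (i : ℕ) < k → k ≤ (j : ℕ) → u i + r i ≤ u j + r j) ∧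
       (∑ i ∈ L, r i = GS) ∧ (∑ j ∈ H, r j = -GS)) := by
    constructor
    · rintro ⟨hS, hmin⟩
      have hTle : totT r ≤ GS := hr₀T ▸ hmin r₀ hr₀S
      obtain ⟨hAge, hTge⟩ := lower r hS
      have hTeq : totT r = GS := le_antisymm hTle hTge
      have hAB : (∑ i ∈ L, r i) + (∑ j ∈ H, r j) = 0 := by
        have := hsplit r
        rw [hS.1] at this; linarith
      have h1 : (∑ i ∈ L, r i) ≤ ∑ i ∈ L, |r i| :=
        Finset.sum_le_sum (fun i _ => le_abs_self _)
      have h2 : -(∑ j ∈ H, r j) ≤ ∑ j ∈ H, |r j| := by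
        rw [← Finset.sum_neg_distrib]
        exact Finset.sum_le_sum (fun i _ => neg_le_abs _)
      have hsum2 : (∑ i ∈ L, |r i|) + (∑ j ∈ H, |r j|) = 2 * GS := by
        have h3 := hsplit (fun i => |r i|)
        rw [totT] at hTeq
        rw [← h3]
        linarith
      have hAeq : ∑ i ∈ L, r i = GS := by linarith
      have hBeq : ∑ j ∈ H, r j = -GS := by linarith
      have habsL : ∑ i ∈ L, r i = ∑ i ∈ L, |r i| := by linarith
      have habsH : ∑ j ∈ H, -r j = ∑ j ∈ H, |r j| := by
        rw [Finset.sum_neg_distrib]; linarith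
      have hposL : ∀ i ∈ L, 0 ≤ r i := by
        intro i hi
        have h := (Finset.sum_eq_sum_iff_of_le
          (fun i (_ : i ∈ L) => le_abs_self (r i))).1 habsL i hi
        rw [h]
        exact abs_nonneg _
      have hnegH : ∀ j ∈ H, r j ≤ 0 := by
        intro j hj
        have h := (Finset.sum_eq_sum_iff_of_le
          (fun j (_ : j ∈ H) => neg_le_abs (r j))).1 habsH j hj
        have habs : 0 ≤ -r j := by rw [h]; exact abs_nonneg _
        linarith
      have hLur : ∑ i ∈ L, (u i + r i) = 0 := by
        rw [Finset.sum_add_distrib, hsumLu, hAeq]; ring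
      refine ⟨fun i hi => hposL i ((hmemL i).2 hi), ?_, ?_, hAeq, hBeq⟩
      · intro j hj
        refine ⟨?_, hnegH j ((hmemH j).2 hj)⟩
        have hjL : j ∉ L := fun hmem => by have := (hmemL j).1 hmem; omega
        have hcoal := hS.2 (insert j L) (by rw [Finset.card_insert_of_notMem hjL, hcardL]; omega)
        rw [Finset.sum_insert hjL, hLur] at hcoal
        linarith
      · intro i j hi hj
        have hiL : i ∈ L := (hmemL i).2 hi
        have hjE : j ∉ L.erase i := fun hmem => by
          have := (hmemL j).1 (Finset.mem_of_mem_erase hmem); omega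
        have hcard : k ≤ (insert j (L.erase i)).card := by
          rw [Finset.card_insert_of_notMem hjE, Finset.card_erase_of_mem hiL, hcardL]
          omega
        have hcoal := hS.2 (insert j (L.erase i)) hcard
        rw [Finset.sum_insert hjE] at hcoal
        have herase : ∑ x ∈ L.erase i, (u x + r x) = -(u i + r i) := by
          have h2 : u i + r i + ∑ x ∈ L.erase i, (u x + r x) = ∑ x ∈ L, (u x + r x) :=
            Finset.add_sum_erase L (fun x => u x + r x) hiL
          rw [hLur] at h2
          linarith
        rw [herase] at hcoal
        linarith
    · rintro ⟨h1, h2, h3, h4, h5⟩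
      obtain ⟨hS, hT⟩ := suffic r h1 h2 h3 h4 h5
      exact ⟨hS, fun r' hr' => hT ▸ (lower r' hr').2⟩
  refine ⟨hiff, fun hE => ?_⟩
  obtain ⟨h1, h2, h3, h4, h5⟩ := hiff.1 hE
  exact (suffic r h1 h2 h3 h4 h5).2
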